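/- Let A be a dissipative operator on a Hilbert space H such that Id − A is surjective (A is m-dissipative). Then A generates a strongly continuous semigroup of contractions on H (Lumer–Phillips theorem). -/

import Mathlib

set_option linter.unusedSectionVars false

open scoped InnerProductSpace
open NormedSpace

namespace LP

variable {H : Type*} [NormedAddCommGroup H] [InnerProductSpace ℂ H] [CompleteSpace H]
variable {D : Submodule ℂ H} {A : D →ₗ[ℂ] H}

/-- `Φ_c = Id - c A` as a linear map `D → H`. -/
noncomputable def Phi (A : D →ₗ[ℂ] H) (c : ℝ) : D →ₗ[ℂ] H := D.subtype - (c : ℂ) • A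

lemma Phi_apply (c : ℝ) (u : D) : Phi A c u = (u : H) - (c : ℂ) • A u := rfl

lemma norm_le_Phi (hdiss : ∀ u : D, (⟪A u, (u : H)⟫_ℂ).re ≤ 0)
    {c : ℝ} (hc : 0 ≤ c) (u : D) : ‖(u : H)‖ ≤ ‖Phi A c u‖ := by
  have h2 : ‖(u:H) - (c:ℂ) • A u‖ ^ 2 =
      ‖(u:H)‖ ^ 2 - 2 * (⟪(u:H), (c:ℂ) • A u⟫_ℂ).re + ‖(c:ℂ) • A u‖ ^ 2 := by
    exact norm_sub_sq (𝕜 := ℂ) _ _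
  have hre : (⟪(u:H), (c:ℂ) • A u⟫_ℂ).re = c * (⟪A u, (u:H)⟫_ℂ).re := by
    rw [inner_smul_right]
    simp only [Complex.mul_re, Complex.ofReal_re, Complex.ofReal_im, zero_mul, sub_zero]
    have h3 : (⟪(u:H), A u⟫_ℂ).re = (⟪A u, (u:H)⟫_ℂ).re := by
      rw [← inner_conj_symm]; exact Complex.conj_re _
    rw [h3]
  have hle : ‖(u:H)‖ ^ 2 ≤ ‖Phi A c u‖ ^ 2 := by
    rw [Phi_apply, h2, hre]
    nlinarith [mul_nonneg hc (neg_nonneg.mpr (hdiss u)), sq_nonneg ‖(c:ℂ) • A u‖]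
  exact le_of_pow_le_pow_left₀ two_ne_zero (norm_nonneg _) hle

lemma Phi_inj (hdiss : ∀ u : D, (⟪A u, (u : H)⟫_ℂ).re ≤ 0)
    {c : ℝ} (hc : 0 ≤ c) : Function.Injective (Phi A c) := by
  intro u v h
  have : ‖((u - v : D) : H)‖ ≤ ‖Phi A c (u - v)‖ := norm_le_Phi hdiss hc _
  rw [map_sub, h, sub_self, norm_zero] at this
  have : (u - v : D) = 0 := by
    ext
    simpa [norm_le_zero_iff] using this
  exact sub_eq_zero.mp this

section Jdef

variable {c : ℝ}

/-- the resolvent as a `D`-valued map -/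
noncomputable def wc (hg : Function.Bijective (Phi A c)) (f : H) : D :=
  (LinearEquiv.ofBijective (Phi A c) hg).symm f

lemma Phi_wc (hg : Function.Bijective (Phi A c)) (f : H) : Phi A c (wc hg f) = f :=
  (LinearEquiv.ofBijective (Phi A c) hg).apply_symm_apply f

lemma wc_eq (hg : Function.Bijective (Phi A c)) (f : H) :
    ((wc hg f : D) : H) - (c:ℂ) • A (wc hg f) = f := Phi_wc hg f

lemma wc_Phi (hg : Function.Bijective (Phi A c)) (u : D) : wc hg (Phi A c u) = u :=
  (LinearEquiv.ofBijective (Phi A c) hg).symm_apply_apply u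

lemma wc_add (hg : Function.Bijective (Phi A c)) (f g : H) :
    wc hg (f + g) = wc hg f + wc hg g := map_add _ _ _

lemma norm_wc_le (hdiss : ∀ u : D, (⟪A u, (u : H)⟫_ℂ).re ≤ 0)
    (hc : 0 ≤ c) (hg : Function.Bijective (Phi A c)) (f : H) :
    ‖((wc hg f : D) : H)‖ ≤ ‖f‖ := by
  have := norm_le_Phi (A := A) hdiss hc (wc hg f)
  rwa [Phi_wc] at this

/-- the resolvent as a continuous linear map on `H` -/
noncomputable def Jc (hdiss : ∀ u : D, (⟪A u, (u : H)⟫_ℂ).re ≤ 0)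
    (hc : 0 ≤ c) (hg : Function.Bijective (Phi A c)) : H →L[ℂ] H :=
  LinearMap.mkContinuous (D.subtype ∘ₗ (LinearEquiv.ofBijective (Phi A c) hg).symm.toLinearMap) 1
    (fun f => by simpa [wc] using norm_wc_le hdiss hc hg f)

lemma Jc_apply (hdiss : ∀ u : D, (⟪A u, (u : H)⟫_ℂ).re ≤ 0)
    (hc : 0 ≤ c) (hg : Function.Bijective (Phi A c)) (f : H) :
    Jc hdiss hc hg f = ((wc hg f : D) : H) := rfl

lemma Jc_norm (hdiss : ∀ u : D, (⟪A u, (u : H)⟫_ℂ).re ≤ 0)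
    (hc : 0 ≤ c) (hg : Function.Bijective (Phi A c)) : ‖Jc hdiss hc hg‖ ≤ 1 :=
  LinearMap.mkContinuous_norm_le _ zero_le_one _

end Jdef

lemma norm_Jc_le (hdiss : ∀ u : D, (⟪A u, (u : H)⟫_ℂ).re ≤ 0)
    {c : ℝ} (hc : 0 ≤ c) (hg : Function.Bijective (Phi A c)) (f : H) :
    ‖Jc hdiss hc hg f‖ ≤ ‖f‖ := by
  rw [Jc_apply]; exact norm_wc_le hdiss hc hg f

lemma surj_one (hsurj : ∀ F : H, ∃ w : D, (w : H) - A w = F) :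
    Function.Surjective (Phi A 1) := by
  intro f
  obtain ⟨w, hw⟩ := hsurj f
  refine ⟨w, ?_⟩
  rw [Phi_apply]
  simpa using hw

lemma surj_step (hdiss : ∀ u : D, (⟪A u, (u : H)⟫_ℂ).re ≤ 0)
    {c : ℝ} (hc : 0 < c) (hg : Function.Surjective (Phi A c)) :
    Function.Surjective (Phi A (2 / 3 * c)) := by
  have hbij : Function.Bijective (Phi A c) := ⟨Phi_inj hdiss hc.le, hg⟩
  have hcne : (c : ℂ) ≠ 0 := by exact_mod_cast hc.ne'
  intro f
  haveI : Nonempty H := ⟨0⟩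
  set F : H → H := fun u => Jc hdiss hc.le hbij ((3/2 : ℂ) • f - (1/2 : ℂ) • u) with hF
  have hlip : LipschitzWith (1/2) F := by
    apply LipschitzWith.of_dist_le_mul
    intro u v
    rw [dist_eq_norm, dist_eq_norm]
    have hFd : F u - F v = Jc hdiss hc.le hbij ((1/2:ℂ) • (v - u)) := by
      rw [hF]; dsimp only; rw [← map_sub]; congr 1
      rw [smul_sub]; abel
    rw [hFd]
    calc ‖Jc hdiss hc.le hbij ((1/2:ℂ) • (v - u))‖ ≤ ‖(1/2:ℂ) • (v - u)‖ :=
          norm_Jc_le hdiss hc.le hbij _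
      _ = (1/2) * ‖u - v‖ := by
          rw [norm_smul, ← neg_sub u v, norm_neg]; norm_num
      _ ≤ ((1/2 : NNReal) : ℝ) * ‖u - v‖ := by norm_num
  have hcontr : ContractingWith (1/2) F := ⟨by exact_mod_cast one_half_lt_one, hlip⟩
  have hfix : F (hcontr.fixedPoint F) = hcontr.fixedPoint F := hcontr.fixedPoint_isFixedPt
  set u0 := hcontr.fixedPoint F with hu0
  set g : H := (3/2 : ℂ) • f - (1/2 : ℂ) • u0 with hgdef
  set w : D := wc hbij g with hw
  have hwu0 : (↑w : H) = u0 := hfix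
  have heq : (↑w : H) - (c:ℂ) • A w = (3/2:ℂ) • f - (1/2:ℂ) • (↑w:H) := by
    rw [wc_eq hbij g, hgdef, hwu0]
  refine ⟨w, ?_⟩
  rw [Phi_apply]
  have h1 : (c:ℂ) • A w = (↑w : H) - ((3/2:ℂ) • f - (1/2:ℂ) • (↑w:H)) := by
    rw [← heq]; abel
  have hAw : A w = (c:ℂ)⁻¹ • ((↑w : H) - ((3/2:ℂ) • f - (1/2:ℂ) • (↑w:H))) := by
    rw [← h1, smul_smul, inv_mul_cancel₀ hcne, one_smul]
  rw [hAw, smul_smul]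
  have hsc : ((2/3 * c : ℝ) : ℂ) * (c:ℂ)⁻¹ = (2/3 : ℂ) := by
    push_cast
    field_simp
  rw [hsc]
  rw [smul_sub, smul_sub, smul_smul, smul_smul]
  norm_num
  match_scalars <;> norm_num

lemma surj_pow (hdiss : ∀ u : D, (⟪A u, (u : H)⟫_ℂ).re ≤ 0)
    (hsurj : ∀ F : H, ∃ w : D, (w : H) - A w = F) (n : ℕ) :
    Function.Surjective (Phi A ((2/3 : ℝ) ^ n)) := by
  induction n with
  | zero => simpa using surj_one hsurj
  | succ n ih =>
      have := surj_step hdiss (c := (2/3:ℝ)^n) (by positivity) ih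
      rwa [pow_succ, mul_comm]

lemma Jc_comm_A (hdiss : ∀ u : D, (⟪A u, (u : H)⟫_ℂ).re ≤ 0)
    {c : ℝ} (hc : 0 < c) (hbij : Function.Bijective (Phi A c)) (u : D) :
    Jc hdiss hc.le hbij (A u) = A (wc hbij (u : H)) := by
  have hcne : (c : ℂ) ≠ 0 := by exact_mod_cast hc.ne'
  set v : D := wc hbij (u : H) with hv
  have hveq : (↑v : H) - (c:ℂ) • A v = ↑u := wc_eq hbij u
  have hvu : (↑v : H) - ↑u = (c:ℂ) • A v := by rw [← hveq]; abel
  set z : D := (c:ℂ)⁻¹ • (v - u) with hz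
  have hzH : (↑z : H) = A v := by
    rw [hz]
    push_cast
    rw [hvu, smul_smul, inv_mul_cancel₀ hcne, one_smul]
  have hPhiz : Phi A c z = A u := by
    rw [Phi_apply, hzH]
    have hAz : A z = (c:ℂ)⁻¹ • (A v - A u) := by
      rw [hz, map_smul, map_sub]
    rw [hAz, smul_smul, mul_inv_cancel₀ hcne, one_smul, sub_sub_cancel]
  have hwz : wc hbij (A u) = z := by rw [← hPhiz, wc_Phi]
  rw [Jc_apply, hwz, hzH]

lemma Jc_comm (hdiss : ∀ u : D, (⟪A u, (u : H)⟫_ℂ).re ≤ 0)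
    {c d : ℝ} (hc : 0 < c) (hd : 0 < d)
    (hbc : Function.Bijective (Phi A c)) (hbd : Function.Bijective (Phi A d)) (f : H) :
    Jc hdiss hc.le hbc (Jc hdiss hd.le hbd f) = Jc hdiss hd.le hbd (Jc hdiss hc.le hbc f) := by
  set u : D := wc hbd f with hu
  set y : D := wc hbc (↑u : H) with hy
  have h1 : Phi A d y = Jc hdiss hc.le hbc f := by
    rw [Phi_apply]
    have hyA : A y = Jc hdiss hc.le hbc (A u) := (Jc_comm_A hdiss hc hbc u).symm
    have hyH : (↑y : H) = Jc hdiss hc.le hbc (↑u : H) := rfl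
    rw [hyH, hyA, ← map_smul, ← map_sub]
    congr 1
    exact wc_eq hbd f
  have h2 : wc hbd (Jc hdiss hc.le hbc f) = y := by rw [← h1, wc_Phi]
  have hL : Jc hdiss hc.le hbc (Jc hdiss hd.le hbd f) = (↑y : H) := rfl
  have hR : Jc hdiss hd.le hbd (Jc hdiss hc.le hbc f) = (↑(wc hbd (Jc hdiss hc.le hbc f)) : H) :=
    rfl
  rw [hL, hR, h2]

lemma dense_D (hdiss : ∀ u : D, (⟪A u, (u : H)⟫_ℂ).re ≤ 0)
    (hsurj : ∀ F : H, ∃ w : D, (w : H) - A w = F) :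
    Dense (D : Set H) := by
  rw [Submodule.dense_iff_topologicalClosure_eq_top]
  rw [← Submodule.orthogonal_orthogonal_eq_closure]
  rw [Submodule.eq_top_iff']
  intro x
  rw [Submodule.mem_orthogonal]
  intro f hf
  -- f ∈ Dᗮ: show f = 0, then inner = 0
  obtain ⟨w, hw⟩ := hsurj f
  have hinner : ⟪(↑w : H), f⟫_ℂ = 0 := hf (↑w) w.2
  have hw0 : (↑w : H) = 0 := by
    have h1 : ⟪(↑w:H), (↑w:H) - A w⟫_ℂ = 0 := by rw [hw]; exact hinner
    rw [inner_sub_right] at h1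
    have h2 : (⟪(↑w:H), (↑w:H)⟫_ℂ).re = (⟪(↑w:H), A w⟫_ℂ).re := by
      have := congrArg Complex.re h1
      simpa [sub_eq_zero] using this
    have h3 : (⟪(↑w:H), A w⟫_ℂ).re = (⟪A w, (↑w:H)⟫_ℂ).re := by
      rw [← inner_conj_symm]; exact Complex.conj_re _
    have h5 : (⟪(↑w:H), (↑w:H)⟫_ℂ).re = ‖(↑w:H)‖ ^ 2 := by
      simpa using inner_self_eq_norm_sq (𝕜 := ℂ) ((↑w : H))
    have h6 : ‖(↑w:H)‖ ^ 2 ≤ 0 := by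
      rw [← h5, h2, h3]; exact hdiss w
    have : ‖(↑w:H)‖ = 0 := by nlinarith [norm_nonneg (↑w : H)]
    exact norm_eq_zero.mp this
  have hwD : w = 0 := by ext; simpa using hw0
  have hf0 : f = 0 := by rw [← hw, hwD]; simp
  simp [hf0]

lemma norm_exp_le_exp_norm (X : H →L[ℂ] H) : ‖exp X‖ ≤ Real.exp ‖X‖ := by
  rw [exp_eq_tsum ℝ]
  have hsum : Summable fun n => ‖(n.factorial⁻¹ : ℝ) • X ^ n‖ := norm_expSeries_summable' X
  have hbound : ∀ n : ℕ, ‖((n.factorial : ℝ))⁻¹ • X ^ n‖ ≤ ‖X‖ ^ n / n.factorial := by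
    intro n
    rw [norm_smul, norm_inv, Real.norm_natCast]
    rw [div_eq_inv_mul]
    apply mul_le_mul_of_nonneg_left _ (by positivity)
    cases n with
    | zero => simp only [pow_zero]; exact ContinuousLinearMap.norm_id_le
    | succ n => exact norm_pow_le' X n.succ_pos
  calc ‖∑' n : ℕ, (n.factorial⁻¹ : ℝ) • X ^ n‖ ≤ ∑' n : ℕ, ‖(n.factorial⁻¹ : ℝ) • X ^ n‖ :=
        norm_tsum_le_tsum_norm hsum
    _ ≤ ∑' n : ℕ, ‖X‖ ^ n / n.factorial := by
        apply Summable.tsum_le_tsum hbound hsum (Real.summable_pow_div_factorial _)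
    _ = Real.exp ‖X‖ := (Real.exp_eq_exp_ℝ ▸ exp_eq_tsum_div (𝔸 := ℝ)) ▸ rfl

lemma exp_real_smul_one (c : ℝ) : exp (c • (1 : H →L[ℂ] H)) = Real.exp c • 1 := by
  have := algebraMap_exp_comm (𝕂 := ℝ) (𝔸 := H →L[ℂ] H) c
  rw [← Real.exp_eq_exp_ℝ] at this
  simpa [Algebra.algebraMap_eq_smul_one] using this.symm

lemma norm_exp_contraction {J : H →L[ℂ] H} (hJ : ‖J‖ ≤ 1) {s : ℝ} (hs : 0 ≤ s) :
    ‖exp (s • J - s • (1 : H →L[ℂ] H))‖ ≤ 1 := by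
  letI : NormedAlgebra ℚ (H →L[ℂ] H) := NormedAlgebra.restrictScalars ℚ ℝ _
  have hcomm : Commute ((-s) • (1 : H →L[ℂ] H)) (s • J) :=
    ((Commute.one_left J).smul_left (-s)).smul_right s
  have h1 : s • J - s • (1 : H →L[ℂ] H) = (-s) • (1 : H →L[ℂ] H) + s • J := by
    rw [neg_smul]; abel
  rw [h1, exp_add_of_commute hcomm, exp_real_smul_one]
  calc ‖(Real.exp (-s) • (1 : H →L[ℂ] H)) * exp (s • J)‖
      ≤ ‖Real.exp (-s) • (1 : H →L[ℂ] H)‖ * ‖exp (s • J)‖ := norm_mul_le _ _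
    _ ≤ (Real.exp (-s) * 1) * Real.exp ‖s • J‖ := by
        apply mul_le_mul _ (norm_exp_le_exp_norm _) (norm_nonneg _) (by positivity)
        rw [norm_smul, Real.norm_eq_abs, Real.abs_exp]
        exact mul_le_mul_of_nonneg_left ContinuousLinearMap.norm_id_le (Real.exp_nonneg _)
    _ ≤ (Real.exp (-s) * 1) * Real.exp s := by
        apply mul_le_mul_of_nonneg_left _ (by positivity)
        apply Real.exp_le_exp.mpr
        rw [norm_smul, Real.norm_eq_abs, abs_of_nonneg hs]
        nlinarith
    _ = 1 := by rw [mul_one, ← Real.exp_add]; simp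

lemma hasDerivAt_exp_apply (B : H →L[ℂ] H) (u : H) (t : ℝ) :
    HasDerivAt (fun s : ℝ => exp (s • B) u) (exp (t • B) (B u)) t := by
  have h1 : HasDerivAt (fun s : ℝ => exp (s • B)) (exp (t • B) * B) t :=
    hasDerivAt_exp_smul_const B t
  have L : (H →L[ℂ] H) →L[ℝ] H :=
    ((ContinuousLinearMap.apply ℂ H u).restrictScalars ℝ)
  have h2 := ((ContinuousLinearMap.apply ℂ H u).restrictScalars ℝ).hasFDerivAt.comp_hasDerivAt t h1
  simpa [Function.comp_def] using h2

lemma mvt_bound {f φ : ℝ → H} {t C : ℝ} (ht : 0 ≤ t)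
    (hf : ∀ s ∈ Set.Icc (0:ℝ) t, HasDerivAt f (φ s) s)
    (hC : ∀ s ∈ Set.Icc (0:ℝ) t, ‖φ s‖ ≤ C) : ‖f t - f 0‖ ≤ C * t := by
  have h := Convex.norm_image_sub_le_of_norm_hasDerivWithin_le
    (f' := φ) (fun s hs => (hf s hs).hasDerivWithinAt) hC (convex_Icc 0 t)
    (Set.left_mem_Icc.mpr ht) (Set.right_mem_Icc.mpr ht)
  simpa [abs_of_nonneg ht] using h

end LP

open LP Filter Topology

set_option maxHeartbeats 1000000 in
set_option synthInstance.maxHeartbeats 1000000 in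
theorem stmt5 {H : Type*} [NormedAddCommGroup H] [InnerProductSpace ℂ H] [CompleteSpace H]
    (D : Submodule ℂ H) (A : D →ₗ[ℂ] H)
    (hdiss : ∀ u : D, (⟪A u, (u : H)⟫_ℂ).re ≤ 0)
    (hsurj : ∀ F : H, ∃ w : D, (w : H) - A w = F) :
    ∃ T : ℝ → H →L[ℂ] H,
      T 0 = 1 ∧
      (∀ s t : ℝ, 0 ≤ s → 0 ≤ t → T (s + t) = (T s).comp (T t)) ∧
      (∀ t : ℝ, 0 ≤ t → ‖T t‖ ≤ 1) ∧
      (∀ x : H, ContinuousOn (fun t => T t x) (Set.Ici 0)) ∧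
      (∀ u : D, HasDerivWithinAt (fun t => T t (u : H)) (A u) (Set.Ici 0) 0) := by
  classical
  letI : NormedAlgebra ℚ (H →L[ℂ] H) := NormedAlgebra.restrictScalars ℚ ℝ _
  set lam : ℕ → ℝ := fun n => (2/3:ℝ)^n with hlamdef
  have hlampos : ∀ n, 0 < lam n := fun n => by positivity
  have hbij : ∀ n, Function.Bijective (Phi A (lam n)) :=
    fun n => ⟨Phi_inj hdiss (hlampos n).le, surj_pow hdiss hsurj n⟩
  set J : ℕ → H →L[ℂ] H := fun n => Jc hdiss (hlampos n).le (hbij n) with hJdef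
  set B : ℕ → H →L[ℂ] H := fun n => (lam n)⁻¹ • (J n - 1) with hBdef
  have hJnorm : ∀ n f, ‖J n f‖ ≤ ‖f‖ := fun n f => norm_Jc_le hdiss (hlampos n).le (hbij n) f
  have hJop : ∀ n, ‖J n‖ ≤ 1 := fun n => Jc_norm hdiss (hlampos n).le (hbij n)
  -- identity J n u - u = lam n • (J n (A u)) for u ∈ D
  have hJu : ∀ n (u : D), J n (u : H) - (u : H) = (lam n : ℂ) • (J n (A u)) := by
    intro n u
    have h2 := wc_eq (hbij n) (u : H)
    have h1 : J n (u : H) = ((wc (hbij n) (u : H) : D) : H) := rfl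
    have h5 : J n (A u) = A (wc (hbij n) (u : H)) := Jc_comm_A hdiss (hlampos n) (hbij n) u
    rw [h1, h5]
    rw [sub_eq_iff_eq_add] at h2
    rw [sub_eq_iff_eq_add, add_comm]
    exact h2
  have hBapp : ∀ n (x : H), B n x = (lam n)⁻¹ • (J n x - x) := by
    intro n x
    rw [hBdef]
    simp [ContinuousLinearMap.sub_apply]
  have hBu : ∀ n (u : D), B n (u : H) = J n (A u) := by
    intro n u
    rw [hBapp, hJu]
    rw [← Complex.coe_algebraMap, algebraMap_smul, smul_smul,
      inv_mul_cancel₀ (hlampos n).ne', one_smul]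
  have hBnorm : ∀ n (u : D), ‖B n (u : H)‖ ≤ ‖A u‖ := by
    intro n u; rw [hBu]; exact hJnorm n (A u)
  have hJdist : ∀ n (v : D), ‖J n (v : H) - (v : H)‖ ≤ lam n * ‖A v‖ := by
    intro n v
    rw [hJu, norm_smul, Complex.norm_real, Real.norm_eq_abs, abs_of_pos (hlampos n)]
    exact mul_le_mul_of_nonneg_left (hJnorm n (A v)) (hlampos n).le
  have hDense : Dense (D : Set H) := dense_D hdiss hsurj
  have approx : ∀ (x : H), ∀ ε > (0:ℝ), ∃ v : D, ‖x - (v : H)‖ < ε := by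
    intro x ε hε
    obtain ⟨y, hy1, hy2⟩ := Metric.dense_iff.mp hDense x ε hε
    exact ⟨⟨y, hy2⟩, by rw [← dist_eq_norm]; exact Metric.mem_ball'.mp hy1⟩
  have hlamto : Tendsto lam atTop (𝓝 0) := by
    rw [hlamdef]
    exact tendsto_pow_atTop_nhds_zero_of_lt_one (by norm_num) (by norm_num)
  have hlamsmall : ∀ c > (0:ℝ), ∀ (M : ℝ), ∃ N, ∀ n ≥ N, lam n * M < c := by
    intro c hc M
    rcases le_or_gt M 0 with hM | hM
    · exact ⟨0, fun n _ => lt_of_le_of_lt (mul_nonpos_of_nonneg_of_nonpos (hlampos n).le hM) hc⟩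
    · have h1 : Tendsto (fun n => lam n * M) atTop (𝓝 (0 * M)) := hlamto.mul_const M
      rw [zero_mul] at h1
      exact eventually_atTop.mp (h1.eventually_lt_const hc)
  have hJconv : ∀ g : H, Tendsto (fun n => J n g) atTop (𝓝 g) := by
    intro g
    rw [Metric.tendsto_atTop]
    intro ε hε
    obtain ⟨v, hv⟩ := approx g (ε/3) (by positivity)
    obtain ⟨N, hN⟩ := hlamsmall (ε/3) (by positivity) ‖A v‖
    refine ⟨N, fun n hn => ?_⟩
    rw [dist_eq_norm]
    have hdec : J n g - g = J n (g - (v:H)) + (J n (v:H) - (v:H)) + ((v:H) - g) := by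
      rw [map_sub]; abel
    calc ‖J n g - g‖ ≤ ‖J n (g - (v:H))‖ + ‖J n (v:H) - (v:H)‖ + ‖(v:H) - g‖ := by
          rw [hdec]; exact norm_add₃_le
      _ ≤ ‖g - (v:H)‖ + lam n * ‖A v‖ + ‖g - (v:H)‖ := by
          gcongr
          · exact hJnorm n _
          · exact hJdist n v
          · rw [norm_sub_rev]
      _ < ε/3 + ε/3 + ε/3 := by
          have := hN n hn
          gcongr
      _ = ε := by ring
  have hBconv : ∀ u : D, Tendsto (fun n => B n (u : H)) atTop (𝓝 (A u)) := by
    intro u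
    simp_rw [hBu]
    exact hJconv (A u)
  have hJJ : ∀ n m, Commute (J n) (J m) :=
    fun n m => ContinuousLinearMap.ext fun f =>
      Jc_comm hdiss (hlampos n) (hlampos m) (hbij n) (hbij m) f
  have hBB : ∀ n m, Commute (B n) (B m) := by
    intro n m
    have h1 : Commute (J n) (J m - 1) := (hJJ n m).sub_right (Commute.one_right _)
    have h2 : Commute (1 : H →L[ℂ] H) (J m - 1) := Commute.one_left _
    have h3 : Commute (J n - 1) (J m - 1) := h1.sub_left h2
    rw [hBdef]
    exact (h3.smul_left _).smul_right _
  set E : ℕ → ℝ → H →L[ℂ] H := fun n t => exp (t • B n) with hEdef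
  have hE0 : ∀ n, E n 0 = 1 := by
    intro n; rw [hEdef]; dsimp only; rw [zero_smul, exp_zero]
  have hEnorm : ∀ n (t : ℝ), 0 ≤ t → ‖E n t‖ ≤ 1 := by
    intro n t ht
    rw [hEdef]; dsimp only
    have hsp : t • B n = (t * (lam n)⁻¹) • J n - (t * (lam n)⁻¹) • (1 : H →L[ℂ] H) := by
      rw [hBdef]; dsimp only; rw [smul_smul, smul_sub]
    rw [hsp]
    exact norm_exp_contraction (hJop n) (by positivity)
  have hEapp : ∀ n (t : ℝ), 0 ≤ t → ∀ x : H, ‖E n t x‖ ≤ ‖x‖ := by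
    intro n t ht x
    calc ‖E n t x‖ ≤ ‖E n t‖ * ‖x‖ := (E n t).le_opNorm x
      _ ≤ 1 * ‖x‖ := mul_le_mul_of_nonneg_right (hEnorm n t ht) (norm_nonneg x)
      _ = ‖x‖ := one_mul _
  have hEadd : ∀ n (s t : ℝ), E n (s + t) = E n s * E n t := by
    intro n s t
    rw [hEdef]; dsimp only
    rw [add_smul]
    exact exp_add_of_commute (((Commute.refl (B n)).smul_left s).smul_right t)
  have hEd : ∀ n (x : H) (t : ℝ), HasDerivAt (fun s : ℝ => E n s x) (E n t (B n x)) t :=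
    fun n x t => hasDerivAt_exp_apply (B n) x t
  have hE2 : ∀ n (t : ℝ), 0 ≤ t → ∀ x : H, ‖E n t x - x‖ ≤ t * ‖B n x‖ := by
    intro n t ht x
    have h := mvt_bound (f := fun s => E n s x) (φ := fun s => E n s (B n x)) ht
      (fun s _ => hEd n x s) (fun s hs => hEapp n s hs.1 (B n x))
    simp only [hE0 n, ContinuousLinearMap.one_apply] at h
    simpa [mul_comm] using h
  have hEsub : ∀ n m (t : ℝ), 0 ≤ t → ∀ x : H,
      ‖E n t x - E m t x‖ ≤ t * ‖B n x - B m x‖ := by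
    intro n m t ht x
    set C : H →L[ℂ] H := B n - B m with hCdef
    have hmc : Commute (B m) C := (hBB m n).sub_right (Commute.refl (B m))
    have hsplit : ∀ s : ℝ, E m t * exp (s • C) = E m (t - s) * E n s := by
      intro s
      rw [hEdef]; dsimp only
      rw [← exp_add_of_commute ((hmc.smul_left t).smul_right s),
        ← exp_add_of_commute (((hBB m n).smul_left (t-s)).smul_right s)]
      congr 1
      rw [hCdef, smul_sub, sub_smul]
      abel
    have hderiv : ∀ s : ℝ, HasDerivAt (fun s : ℝ => E m t (exp (s • C) x))
        (E m t (exp (s • C) (C x))) s := by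
      intro s
      have h1 := ((E m t).restrictScalars ℝ).hasFDerivAt.comp_hasDerivAt s
        (hasDerivAt_exp_apply C x s)
      simpa [Function.comp_def] using h1
    have hbound : ∀ s ∈ Set.Icc (0:ℝ) t, ‖E m t (exp (s • C) (C x))‖ ≤ ‖C x‖ := by
      intro s hs
      rw [← ContinuousLinearMap.mul_apply (E m t) (exp (s • C)) (C x), hsplit s,
        ContinuousLinearMap.mul_apply]
      calc ‖E m (t - s) (E n s (C x))‖ ≤ ‖E n s (C x)‖ :=
            hEapp m (t - s) (by linarith [hs.2]) _
        _ ≤ ‖C x‖ := hEapp n s hs.1 _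
    have h := mvt_bound (f := fun s => E m t (exp (s • C) x))
      (φ := fun s => E m t (exp (s • C) (C x))) ht (fun s _ => hderiv s) hbound
    have hgt : E m t (exp (t • C) x) = E n t x := by
      rw [← ContinuousLinearMap.mul_apply (E m t) (exp (t • C)) x, hsplit t, sub_self,
        hE0 m, one_mul]
    have hg0 : E m t (exp ((0:ℝ) • C) x) = E m t x := by
      rw [zero_smul, exp_zero, ContinuousLinearMap.one_apply]
    rw [hgt, hg0] at h
    calc ‖E n t x - E m t x‖ ≤ ‖C x‖ * t := h
      _ = t * ‖B n x - B m x‖ := by rw [mul_comm, hCdef]; rfl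
  have hEdiff : ∀ (t : ℝ), 0 ≤ t → ∀ (x : H) (v : D) (n m : ℕ),
      ‖E n t x - E m t x‖ ≤ 2*‖x - (v:H)‖ + t*‖B n (v:H) - A v‖ + t*‖B m (v:H) - A v‖ := by
    intro t ht x v n m
    have h1 : E n t x - E m t x
        = (E n t (x - (v:H)) - E m t (x - (v:H))) + (E n t (v:H) - E m t (v:H)) := by
      rw [map_sub, map_sub]; abel
    have h2 : ‖B n (v:H) - B m (v:H)‖ ≤ ‖B n (v:H) - A v‖ + ‖B m (v:H) - A v‖ := by
      have h3 : B n (v:H) - B m (v:H) = (B n (v:H) - A v) - (B m (v:H) - A v) := by abel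
      rw [h3]
      exact norm_sub_le _ _
    calc ‖E n t x - E m t x‖
        ≤ ‖E n t (x - (v:H))‖ + ‖E m t (x - (v:H))‖ + ‖E n t (v:H) - E m t (v:H)‖ := by
          rw [h1]
          refine (norm_add_le _ _).trans ?_
          gcongr
          exact norm_sub_le _ _
      _ ≤ ‖x - (v:H)‖ + ‖x - (v:H)‖ + t * ‖B n (v:H) - B m (v:H)‖ := by
          gcongr
          · exact hEapp n t ht _
          · exact hEapp m t ht _
          · exact hEsub n m t ht _
      _ ≤ 2*‖x - (v:H)‖ + t*‖B n (v:H) - A v‖ + t*‖B m (v:H) - A v‖ := by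
          have h4 := mul_le_mul_of_nonneg_left h2 ht
          linarith
  have hBerr : ∀ (t : ℝ) (v : D), ∀ c > (0:ℝ), ∃ N, ∀ n ≥ N, t * ‖B n (v:H) - A v‖ < c := by
    intro t v c hc
    have h1 : Tendsto (fun n => B n (v:H) - A v) atTop (𝓝 (A v - A v)) :=
      (hBconv v).sub tendsto_const_nhds
    rw [sub_self] at h1
    have h2 : Tendsto (fun n => t * ‖B n (v:H) - A v‖) atTop (𝓝 (t * ‖(0:H)‖)) :=
      h1.norm.const_mul t
    rw [norm_zero, mul_zero] at h2
    exact eventually_atTop.mp (h2.eventually_lt_const hc)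
  have hconv : ∀ (t : ℝ), 0 ≤ t → ∀ x : H, ∃ L, Tendsto (fun n => E n t x) atTop (𝓝 L) := by
    intro t ht x
    apply cauchySeq_tendsto_of_complete
    rw [Metric.cauchySeq_iff]
    intro ε hε
    obtain ⟨v, hv⟩ := approx x (ε/8) (by positivity)
    obtain ⟨N, hN⟩ := hBerr t v (ε/4) (by positivity)
    refine ⟨N, fun a ha b hb => ?_⟩
    rw [dist_eq_norm]
    have h1 := hEdiff t ht x v a b
    have h2 := hN a ha
    have h3 := hN b hb
    linarith
  set Tf : ℝ → H → H := fun t x => limUnder atTop (fun n => E n (max t 0) x) with hTfdef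
  have htend : ∀ (t : ℝ) (x : H), Tendsto (fun n => E n (max t 0) x) atTop (𝓝 (Tf t x)) := by
    intro t x
    obtain ⟨L, hL⟩ := hconv (max t 0) (le_max_right t 0) x
    rw [hTfdef]; dsimp only
    rw [hL.limUnder_eq]
    exact hL
  have htend' : ∀ (t : ℝ), 0 ≤ t → ∀ x, Tendsto (fun n => E n t x) atTop (𝓝 (Tf t x)) := by
    intro t ht x
    have h1 := htend t x
    rwa [max_eq_left ht] at h1
  have hTfnorm : ∀ (t : ℝ) (x : H), ‖Tf t x‖ ≤ ‖x‖ := by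
    intro t x
    apply le_of_tendsto (htend t x).norm
    filter_upwards with n using hEapp n _ (le_max_right t 0) x
  set T : ℝ → H →L[ℂ] H := fun t =>
    LinearMap.mkContinuous
      { toFun := Tf t
        map_add' := fun x y => by
          apply tendsto_nhds_unique (htend t (x + y))
          have h1 := (htend t x).add (htend t y)
          simpa [map_add] using h1
        map_smul' := fun c x => by
          apply tendsto_nhds_unique (htend t (c • x))
          have h1 := (htend t x).const_smul c
          simpa [map_smul] using h1 }
      1 (fun x => by simpa using hTfnorm t x) with hTdef
  have hTapp : ∀ (t : ℝ) (x : H), T t x = Tf t x := fun t x => rfl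
  have hTf0 : ∀ x : H, Tf 0 x = x := by
    intro x
    have h1 := htend' 0 le_rfl x
    have h2 : Tendsto (fun n => E n 0 x) atTop (𝓝 x) := by
      have : (fun n => E n 0 x) = fun _ => x := by
        funext n; rw [hE0 n, ContinuousLinearMap.one_apply]
      rw [this]
      exact tendsto_const_nhds
    exact tendsto_nhds_unique h1 h2
  have hT0 : T 0 = 1 := by
    ext x
    rw [hTapp, hTf0, ContinuousLinearMap.one_apply]
  have hsemi : ∀ s t : ℝ, 0 ≤ s → 0 ≤ t → T (s + t) = (T s).comp (T t) := by
    intro s t hs ht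
    ext x
    rw [ContinuousLinearMap.comp_apply, hTapp, hTapp, hTapp]
    have h1 := htend' (s+t) (by linarith) x
    have h2 : Tendsto (fun n => E n (s+t) x) atTop (𝓝 (Tf s (Tf t x))) := by
      rw [tendsto_iff_norm_sub_tendsto_zero]
      have hbd : ∀ n, ‖E n (s+t) x - Tf s (Tf t x)‖
          ≤ ‖E n t x - Tf t x‖ + ‖E n s (Tf t x) - Tf s (Tf t x)‖ := by
        intro n
        have hfun : E n (s+t) x = E n s (E n t x) := by
          rw [hEadd n s t, ContinuousLinearMap.mul_apply]
        have hdec : E n (s+t) x - Tf s (Tf t x)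
            = E n s (E n t x - Tf t x) + (E n s (Tf t x) - Tf s (Tf t x)) := by
          rw [map_sub, hfun]; abel
        rw [hdec]
        refine (norm_add_le _ _).trans ?_
        gcongr
        exact hEapp n s hs _
      apply squeeze_zero (fun n => norm_nonneg _) hbd
      have ha : Tendsto (fun n => ‖E n t x - Tf t x‖) atTop (𝓝 0) := by
        have := (htend' t ht x).sub (tendsto_const_nhds (x := Tf t x))
        rw [sub_self] at this
        simpa using this.norm
      have hb : Tendsto (fun n => ‖E n s (Tf t x) - Tf s (Tf t x)‖) atTop (𝓝 0) := by
        have := (htend' s hs (Tf t x)).sub (tendsto_const_nhds (x := Tf s (Tf t x)))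
        rw [sub_self] at this
        simpa using this.norm
      simpa using ha.add hb
    exact tendsto_nhds_unique h1 h2
  have hnorm : ∀ t : ℝ, 0 ≤ t → ‖T t‖ ≤ 1 := by
    intro t _
    exact LinearMap.mkContinuous_norm_le _ zero_le_one _
  have hTlip : ∀ (v : D) (s t : ℝ), 0 ≤ s → s ≤ t →
      ‖Tf t (v:H) - Tf s (v:H)‖ ≤ (t - s) * ‖A v‖ := by
    intro v s t hs hst
    have ht : 0 ≤ t := le_trans hs hst
    have key : ∀ n, ‖E n t (v:H) - E n s (v:H)‖ ≤ (t - s) * ‖A v‖ := by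
      intro n
      have h1 : E n t = E n s * E n (t - s) := by
        rw [← hEadd n s (t-s)]
        congr 1
        ring
      have h2 : E n t (v:H) - E n s (v:H) = E n s (E n (t-s) (v:H) - (v:H)) := by
        rw [map_sub, h1, ContinuousLinearMap.mul_apply]
      rw [h2]
      calc ‖E n s (E n (t-s) (v:H) - (v:H))‖ ≤ ‖E n (t-s) (v:H) - (v:H)‖ := hEapp n s hs _
        _ ≤ (t-s) * ‖B n (v:H)‖ := hE2 n (t-s) (by linarith) _
        _ ≤ (t-s) * ‖A v‖ := mul_le_mul_of_nonneg_left (hBnorm n v) (by linarith)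
    have h3 : Tendsto (fun n => E n t (v:H) - E n s (v:H)) atTop (𝓝 (Tf t (v:H) - Tf s (v:H))) :=
      (htend' t ht _).sub (htend' s hs _)
    exact le_of_tendsto h3.norm (Filter.Eventually.of_forall key)
  have hcont : ∀ x : H, ContinuousOn (fun t => T t x) (Set.Ici 0) := by
    intro x t0 ht0
    rw [Metric.continuousWithinAt_iff]
    intro ε hε
    obtain ⟨v, hv⟩ := approx x (ε/4) (by positivity)
    have hAv : (0:ℝ) ≤ ‖A v‖ := norm_nonneg _
    refine ⟨ε/(4*(‖A v‖+1)), by positivity, fun t ht hdist => ?_⟩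
    have ht' : (0:ℝ) ≤ t := ht
    have ht0' : (0:ℝ) ≤ t0 := ht0
    have hb : ‖Tf t (v:H) - Tf t0 (v:H)‖ ≤ |t - t0| * ‖A v‖ := by
      rcases le_total t0 t with h | h
      · have h1 := hTlip v t0 t ht0' h
        rwa [abs_of_nonneg (by linarith)]
      · have h1 := hTlip v t t0 ht' h
        rw [abs_of_nonpos (by linarith), norm_sub_rev]
        rw [neg_sub]
        exact h1
    rw [dist_eq_norm]
    have hdist' : |t - t0| < ε/(4*(‖A v‖+1)) := by
      rw [← Real.dist_eq]
      exact hdist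
    calc ‖T t x - T t0 x‖ ≤ ‖Tf t (x - (v:H))‖ + ‖Tf t (v:H) - Tf t0 (v:H)‖ + ‖Tf t0 ((v:H) - x)‖ := by
          have hdec : T t x - T t0 x
              = T t (x - (v:H)) + (Tf t (v:H) - Tf t0 (v:H)) + T t0 ((v:H) - x) := by
            rw [map_sub, map_sub, hTapp t x, hTapp t (v:H), hTapp t0 (v:H), hTapp t0 x]
            abel
          rw [hdec]
          exact norm_add₃_le
      _ ≤ ‖x - (v:H)‖ + |t - t0| * ‖A v‖ + ‖x - (v:H)‖ := by
          have e1 : ‖Tf t (x - (v:H))‖ ≤ ‖x - (v:H)‖ := hTfnorm t _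
          have e3 : ‖Tf t0 ((v:H) - x)‖ ≤ ‖x - (v:H)‖ :=
            (hTfnorm t0 _).trans (le_of_eq (norm_sub_rev _ _))
          exact add_le_add (add_le_add e1 hb) e3
      _ < ε := by
          have h5 : |t - t0| * ‖A v‖ ≤ |t - t0| * (‖A v‖ + 1) := by
            apply mul_le_mul_of_nonneg_left _ (abs_nonneg _)
            linarith
          have h6 : |t - t0| * (‖A v‖ + 1) < ε/(4*(‖A v‖+1)) * (‖A v‖ + 1) := by
            apply mul_lt_mul_of_pos_right hdist'
            linarith
          have h7 : ε/(4*(‖A v‖+1)) * (‖A v‖ + 1) = ε/4 := by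
            field_simp
          nlinarith
  have hderiv : ∀ u : D, HasDerivWithinAt (fun t => T t (u : H)) (A u) (Set.Ici 0) 0 := by
    intro u
    have hE3 : ∀ n (t : ℝ), 0 ≤ t → ∀ v : D,
        ‖E n t (u:H) - (u:H) - t • B n (u:H)‖
          ≤ t * (2*‖B n (u:H) - A u‖ + 2*‖A u - (v:H)‖ + t*‖A v‖) := by
      intro n t ht v
      have hder : ∀ s : ℝ, HasDerivAt (fun s : ℝ => E n s (u:H) - s • B n (u:H))
          (E n s (B n (u:H)) - B n (u:H)) s := by
        intro s
        have h1 := (hEd n (u:H) s).sub ((hasDerivAt_id s).smul_const (B n (u:H)))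
        simpa [Pi.sub_def] using h1
      have hbound : ∀ s ∈ Set.Icc (0:ℝ) t, ‖E n s (B n (u:H)) - B n (u:H)‖
          ≤ 2*‖B n (u:H) - A u‖ + 2*‖A u - (v:H)‖ + t*‖A v‖ := by
        intro s hs
        have hs0 := hs.1
        have hs1 := hs.2
        have step2 : ‖E n s (A u) - A u‖ ≤ 2*‖A u - (v:H)‖ + t*‖A v‖ := by
          have hdec : E n s (A u) - A u
              = E n s (A u - (v:H)) + (E n s (v:H) - (v:H)) + ((v:H) - A u) := by
            rw [map_sub]; abel
          calc ‖E n s (A u) - A u‖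
              ≤ ‖E n s (A u - (v:H))‖ + ‖E n s (v:H) - (v:H)‖ + ‖(v:H) - A u‖ := by
                rw [hdec]; exact norm_add₃_le
            _ ≤ ‖A u - (v:H)‖ + s * ‖A v‖ + ‖A u - (v:H)‖ := by
                gcongr
                · exact hEapp n s hs0 _
                · exact (hE2 n s hs0 _).trans (mul_le_mul_of_nonneg_left (hBnorm n v) hs0)
                · rw [norm_sub_rev]
            _ ≤ 2*‖A u - (v:H)‖ + t*‖A v‖ := by
                have := mul_le_mul_of_nonneg_right hs1 (norm_nonneg (A v))
                linarith
        have hdec2 : E n s (B n (u:H)) - B n (u:H)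
            = E n s (B n (u:H) - A u) + (E n s (A u) - A u) + (A u - B n (u:H)) := by
          rw [map_sub]; abel
        calc ‖E n s (B n (u:H)) - B n (u:H)‖
            ≤ ‖E n s (B n (u:H) - A u)‖ + ‖E n s (A u) - A u‖ + ‖A u - B n (u:H)‖ := by
              rw [hdec2]; exact norm_add₃_le
          _ ≤ ‖B n (u:H) - A u‖ + (2*‖A u - (v:H)‖ + t*‖A v‖) + ‖B n (u:H) - A u‖ := by
              have e1 : ‖E n s (B n (u:H) - A u)‖ ≤ ‖B n (u:H) - A u‖ := hEapp n s hs0 _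
              have e3 : ‖A u - B n (u:H)‖ ≤ ‖B n (u:H) - A u‖ := le_of_eq (norm_sub_rev _ _)
              exact add_le_add (add_le_add e1 step2) e3
          _ = 2*‖B n (u:H) - A u‖ + 2*‖A u - (v:H)‖ + t*‖A v‖ := by ring
      have h := mvt_bound (f := fun s => E n s (u:H) - s • B n (u:H))
          (φ := fun s => E n s (B n (u:H)) - B n (u:H)) ht (fun s _ => hder s) hbound
      have hzero : E n 0 (u:H) - (0:ℝ) • B n (u:H) = (u:H) := by
        rw [hE0 n, ContinuousLinearMap.one_apply, zero_smul, sub_zero]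
      rw [hzero] at h
      have heq : E n t (u:H) - t • B n (u:H) - (u:H) = E n t (u:H) - (u:H) - t • B n (u:H) := by
        abel
      rw [heq] at h
      calc ‖E n t (u:H) - (u:H) - t • B n (u:H)‖
          ≤ (2*‖B n (u:H) - A u‖ + 2*‖A u - (v:H)‖ + t*‖A v‖) * t := h
        _ = t * (2*‖B n (u:H) - A u‖ + 2*‖A u - (v:H)‖ + t*‖A v‖) := by ring
    have hTf3 : ∀ (t : ℝ), 0 ≤ t → ∀ v : D,
        ‖Tf t (u:H) - (u:H) - t • A u‖ ≤ t * (2*‖A u - (v:H)‖ + t*‖A v‖) := by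
      intro t ht v
      have h1 : Tendsto (fun n => E n t (u:H) - (u:H) - t • B n (u:H)) atTop
          (𝓝 (Tf t (u:H) - (u:H) - t • A u)) :=
        ((htend' t ht (u:H)).sub tendsto_const_nhds).sub ((hBconv u).const_smul t)
      have hz : Tendsto (fun n => ‖B n (u:H) - A u‖) atTop (𝓝 0) := by
        have := (hBconv u).sub (tendsto_const_nhds (x := A u))
        rw [sub_self] at this
        simpa using this.norm
      have h2 : Tendsto (fun n => t * (2*‖B n (u:H) - A u‖ + 2*‖A u - (v:H)‖ + t*‖A v‖)) atTop
          (𝓝 (t * (2*0 + 2*‖A u - (v:H)‖ + t*‖A v‖))) := by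
        apply Tendsto.const_mul
        exact ((hz.const_mul 2).add tendsto_const_nhds).add tendsto_const_nhds
      have h3 := le_of_tendsto_of_tendsto' h1.norm h2 (fun n => hE3 n t ht v)
      have h4 : t * (2*0 + 2*‖A u - (v:H)‖ + t*‖A v‖) = t * (2*‖A u - (v:H)‖ + t*‖A v‖) := by
        ring
      rwa [h4] at h3
    rw [hasDerivWithinAt_iff_isLittleO]
    rw [Asymptotics.isLittleO_iff]
    intro c hc
    obtain ⟨v, hv⟩ := approx (A u) (c/4) (by positivity)
    have hAv : (0:ℝ) ≤ ‖A v‖ := norm_nonneg _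
    have hδ : (0:ℝ) < c/(2*(‖A v‖+1)) := by positivity
    have hmem : ∀ᶠ (t:ℝ) in 𝓝[Set.Ici 0] 0, t ∈ Set.Ici (0:ℝ) := eventually_mem_nhdsWithin
    have hsmall : ∀ᶠ (t:ℝ) in 𝓝[Set.Ici 0] 0, |t| < c/(2*(‖A v‖+1)) := by
      apply eventually_nhdsWithin_of_eventually_nhds
      simpa using eventually_abs_sub_lt 0 hδ
    filter_upwards [hmem, hsmall] with t htmem htsmall
    have ht : (0:ℝ) ≤ t := htmem
    have habs : |t| = t := abs_of_nonneg ht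
    rw [habs] at htsmall
    have hkey := hTf3 t ht v
    have hrw : T t (u:H) - T 0 (u:H) - (t - 0) • A u = Tf t (u:H) - (u:H) - t • A u := by
      rw [hTapp, hTapp, hTf0, sub_zero]
    calc ‖T t (u:H) - T 0 (u:H) - (t - 0) • A u‖
        = ‖Tf t (u:H) - (u:H) - t • A u‖ := by rw [hrw]
      _ ≤ t * (2*‖A u - (v:H)‖ + t*‖A v‖) := hkey
      _ ≤ c * ‖t - 0‖ := by
          rw [sub_zero, Real.norm_eq_abs, habs]
          have e1 : 2*‖A u - (v:H)‖ ≤ c/2 := by linarith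
          have e2 : t * ‖A v‖ ≤ c/2 := by
            have h8 : t * ‖A v‖ ≤ t * (‖A v‖ + 1) :=
              mul_le_mul_of_nonneg_left (by linarith) ht
            have h9 : t * (‖A v‖+1) ≤ (c/(2*(‖A v‖+1))) * (‖A v‖+1) :=
              mul_le_mul_of_nonneg_right htsmall.le (by linarith)
            have h10 : (c/(2*(‖A v‖+1))) * (‖A v‖+1) = c/2 := by
              field_simp
            linarith
          have e3 : 2*‖A u - (v:H)‖ + t*‖A v‖ ≤ c := by linarith
          calc t * (2*‖A u - (v:H)‖ + t*‖A v‖) ≤ t * c := mul_le_mul_of_nonneg_left e3 ht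
            _ = c * t := mul_comm _ _
  exact ⟨T, hT0, hsemi, hnorm, hcont, hderiv⟩
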